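/- arXiv:1206.6089 — 3 statements merged into one kernel-verified Lean document; each statement's English description precedes it below -/
import Mathlib

section
/- Let A₁, A₂, A₃, A₄ > 0. Suppose y : [0,∞) → ℝ is nonnegative, continuous, and differentiable on (0,∞), h : [0,∞) → ℝ is nonnegative and continuous, and they satisfy y'(t) ≤ A₁·y(t)² + A₂ + h(t) for all t > 0, together with ∫₀^∞ y(t) dt ≤ A₃ and ∫₀^∞ h(t) dt ≤ A₄. Then y(t) → 0 as t → +∞. -/
open MeasureTheory Filter

/-- Key differential inequality step: on an interval where `y ≤ 1`, the bound
`y' ≤ A₁ y² + A₂ + h` integrates to a linear-plus-integral bound. -/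
private lemma zheng_key (A₁ A₂ : ℝ) (hA₁ : 0 < A₁) (y h y' : ℝ → ℝ)
    (hy_nonneg : ∀ t, 0 ≤ t → 0 ≤ y t)
    (hy_cont : ContinuousOn y (Set.Ici (0 : ℝ)))
    (hy_deriv : ∀ t, 0 < t → HasDerivAt y (y' t) t)
    (hh_cont : ContinuousOn h (Set.Ici (0 : ℝ)))
    (hineq : ∀ t, 0 < t → y' t ≤ A₁ * (y t) ^ 2 + A₂ + h t)
    (s b : ℝ) (hs : 0 < s) (hsb : s ≤ b)
    (hbound : ∀ v ∈ Set.Ioo s b, y v ≤ 1) :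
    y b ≤ y s + (A₁ + A₂) * (b - s) + ∫ v in s..b, h v := by
  set g : ℝ → ℝ := fun u => y u - (A₁ + A₂) * (u - s) - ∫ v in s..u, h v with hg
  have hsub : Set.Icc s b ⊆ Set.Ici (0 : ℝ) := fun x hx => le_trans hs.le hx.1
  have hIcc_int : IntegrableOn h (Set.uIcc s b) := by
    rw [Set.uIcc_of_le hsb]
    exact (hh_cont.mono hsub).integrableOn_Icc
  have hcont : ContinuousOn g (Set.Icc s b) := by
    refine ((hy_cont.mono hsub).sub
      (((continuous_const.mul (continuous_id.sub continuous_const))).continuousOn)).sub ?_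
    have := intervalIntegral.continuousOn_primitive_interval (a := s) (b := b) (f := h) (μ := volume) hIcc_int
    rwa [Set.uIcc_of_le hsb] at this
  have hderiv : ∀ x ∈ Set.Ioo s b, HasDerivAt g (y' x - ((A₁ + A₂) * 1 + h x)) x := by
    intro x hx
    have hx0 : (0 : ℝ) < x := lt_trans hs hx.1
    have ftc : HasDerivAt (fun u => ∫ v in s..u, h v) (h x) x := by
      refine intervalIntegral.integral_hasDerivAt_right ?_ ?_ ?_
      · refine (hIcc_int.mono_set ?_).intervalIntegrable
        rw [Set.uIcc_of_le hx.1.le, Set.uIcc_of_le hsb]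
        exact Set.Icc_subset_Icc le_rfl hx.2.le
      · exact ⟨Set.Ioi 0, Ioi_mem_nhds hx0,
          (hh_cont.mono Set.Ioi_subset_Ici_self).aestronglyMeasurable measurableSet_Ioi⟩
      · exact hh_cont.continuousAt (Filter.mem_of_superset (Ioi_mem_nhds hx0)
          Set.Ioi_subset_Ici_self)
    have H := (hy_deriv x hx0).sub
      ((((hasDerivAt_id x).sub_const s).const_mul (A₁ + A₂)).add ftc)
    have e : g = y - ((fun y => (A₁ + A₂) * (id y - s)) + fun u => ∫ v in s..u, h v) := by
      funext u; simp only [hg, Pi.sub_apply, Pi.add_apply, id_eq]; ring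
    rw [e]; exact H
  have anti : AntitoneOn g (Set.Icc s b) := by
    refine antitoneOn_of_deriv_nonpos (convex_Icc s b) hcont ?_ ?_
    · intro x hx
      rw [interior_Icc] at hx
      exact (hderiv x hx).differentiableAt.differentiableWithinAt
    · intro x hx
      rw [interior_Icc] at hx
      rw [(hderiv x hx).deriv]
      have hx0 : (0 : ℝ) < x := lt_trans hs hx.1
      have h1 : y' x ≤ A₁ * (y x) ^ 2 + A₂ + h x := hineq x hx0
      have h2 : 0 ≤ y x := hy_nonneg x hx0.le
      have h3 : y x ≤ 1 := hbound x hx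
      have h4 : (y x) ^ 2 ≤ 1 := by nlinarith
      have h5 : A₁ * (y x) ^ 2 ≤ A₁ * 1 := mul_le_mul_of_nonneg_left h4 hA₁.le
      linarith
  have hgb : g b ≤ g s :=
    anti (Set.left_mem_Icc.2 hsb) (Set.right_mem_Icc.2 hsb) hsb
  have hgs : g s = y s := by
    simp [hg, intervalIntegral.integral_same]
  rw [hgs] at hgb
  have : y b - (A₁ + A₂) * (b - s) - ∫ v in s..b, h v ≤ y s := hgb
  linarith

/-- Lemma 4.2 (Zheng): if `y` is nonnegative, continuous on `[0,∞)`, differentiable on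
`(0,∞)` with derivative `y'`, `h` is nonnegative and continuous on `[0,∞)`,
`y' t ≤ A₁ y(t)² + A₂ + h(t)` for `t > 0`, and `∫₀^∞ y ≤ A₃`, `∫₀^∞ h ≤ A₄`,
then `y(t) → 0` as `t → +∞`. -/
theorem zheng_decay_lemma
    (A₁ A₂ A₃ A₄ : ℝ) (hA₁ : 0 < A₁) (hA₂ : 0 < A₂) (hA₃ : 0 < A₃) (hA₄ : 0 < A₄)
    (y h y' : ℝ → ℝ)
    (hy_nonneg : ∀ t, 0 ≤ t → 0 ≤ y t)
    (hy_cont : ContinuousOn y (Set.Ici (0 : ℝ)))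
    (hy_deriv : ∀ t, 0 < t → HasDerivAt y (y' t) t)
    (hh_nonneg : ∀ t, 0 ≤ t → 0 ≤ h t)
    (hh_cont : ContinuousOn h (Set.Ici (0 : ℝ)))
    (hineq : ∀ t, 0 < t → y' t ≤ A₁ * (y t) ^ 2 + A₂ + h t)
    (hy_int : ∫⁻ t in Set.Ioi (0 : ℝ), ENNReal.ofReal (y t) ≤ ENNReal.ofReal A₃)
    (hh_int : ∫⁻ t in Set.Ioi (0 : ℝ), ENNReal.ofReal (h t) ≤ ENNReal.ofReal A₄) :
    Tendsto y atTop (nhds 0) := by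
  -- integrability of y and h on (0, ∞)
  have mkInt : ∀ (f : ℝ → ℝ) (B : ℝ), (∀ t, 0 ≤ t → 0 ≤ f t) →
      ContinuousOn f (Set.Ici (0 : ℝ)) →
      (∫⁻ t in Set.Ioi (0 : ℝ), ENNReal.ofReal (f t) ≤ ENNReal.ofReal B) →
      IntegrableOn f (Set.Ioi (0 : ℝ)) := by
    intro f B hf0 hfc hfi
    have hmeas : AEStronglyMeasurable f (volume.restrict (Set.Ioi (0 : ℝ))) :=
      (hfc.mono Set.Ioi_subset_Ici_self).aestronglyMeasurable measurableSet_Ioi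
    have hae : 0 ≤ᵐ[volume.restrict (Set.Ioi (0 : ℝ))] f :=
      (ae_restrict_iff' measurableSet_Ioi).2 (ae_of_all _ fun t ht => hf0 t ht.le)
    refine ⟨hmeas, ?_⟩
    rw [hasFiniteIntegral_iff_ofReal hae]
    exact lt_of_le_of_lt hfi ENNReal.ofReal_lt_top
  have hy_int' : IntegrableOn y (Set.Ioi (0 : ℝ)) := mkInt y A₃ hy_nonneg hy_cont hy_int
  have hh_int' : IntegrableOn h (Set.Ioi (0 : ℝ)) := mkInt h A₄ hh_nonneg hh_cont hh_int
  -- tail integrals tend to 0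
  have tail : ∀ (f : ℝ → ℝ), IntegrableOn f (Set.Ioi (0 : ℝ)) →
      Tendsto (fun T => ∫ u in Set.Ioi T, f u) atTop (nhds 0) := by
    intro f hf
    have h1 : Tendsto (fun T => ∫ u in (0 : ℝ)..T, f u) atTop
        (nhds (∫ u in Set.Ioi (0 : ℝ), f u)) :=
      intervalIntegral_tendsto_integral_Ioi 0 hf tendsto_id
    have h2 : Tendsto (fun T => (∫ u in Set.Ioi (0 : ℝ), f u) - ∫ u in (0 : ℝ)..T, f u)
        atTop (nhds ((∫ u in Set.Ioi (0 : ℝ), f u) - ∫ u in Set.Ioi (0 : ℝ), f u)) :=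
      tendsto_const_nhds.sub h1
    rw [sub_self] at h2
    refine h2.congr' ?_
    filter_upwards [eventually_ge_atTop (0 : ℝ)] with T hT
    have hsplit : ∫ u in Set.Ioi (0 : ℝ), f u
        = (∫ u in Set.Ioc 0 T, f u) + ∫ u in Set.Ioi T, f u := by
      rw [← setIntegral_union (Set.Ioc_disjoint_Ioi le_rfl) measurableSet_Ioi
        (hf.mono_set Set.Ioc_subset_Ioi_self)
        (hf.mono_set (Set.Ioi_subset_Ioi hT)), Set.Ioc_union_Ioi_eq_Ioi hT]
    rw [intervalIntegral.integral_of_le hT, hsplit]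
    ring
  -- main argument
  rw [Metric.tendsto_atTop]
  intro ε hε
  set c : ℝ := min ε 1 / 2 with hc_def
  have hc : 0 < c := by positivity
  have hc1 : c ≤ 1 / 2 := by
    have : min ε 1 ≤ 1 := min_le_right _ _
    simp only [hc_def]; linarith
  have hcε : c < ε := by
    have : min ε 1 ≤ ε := min_le_left _ _
    simp only [hc_def]; linarith
  set δ : ℝ := c / (3 * (A₁ + A₂)) with hδ_def
  have hδ : 0 < δ := by positivity
  have hδc : (A₁ + A₂) * δ = c / 3 := by
    rw [hδ_def]; field_simp
  -- choose T with small tails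
  obtain ⟨T, hT1, hTy, hTh⟩ :
      ∃ T : ℝ, 1 ≤ T ∧ (∫ u in Set.Ioi T, y u) < c / 3 * δ ∧
        (∫ u in Set.Ioi T, h u) < c / 3 := by
    have e1 := (tail y hy_int').eventually (gt_mem_nhds (show (0 : ℝ) < c / 3 * δ by positivity))
    have e2 := (tail h hh_int').eventually (gt_mem_nhds (show (0 : ℝ) < c / 3 by positivity))
    obtain ⟨T, hT⟩ := ((eventually_ge_atTop (1 : ℝ)).and (e1.and e2)).exists
    exact ⟨T, hT.1, hT.2.1, hT.2.2⟩
  refine ⟨T + δ, fun t ht => ?_⟩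
  have hTt : T ≤ t - δ := by linarith
  have ht0 : (0 : ℝ) < t := by linarith
  -- find a point s in (t - δ, t) where y is small
  have hnot : ¬ ∀ u ∈ Set.Ioo (t - δ) t, c / 3 ≤ y u := by
    intro hall
    have hIoo_sub : Set.Ioo (t - δ) t ⊆ Set.Ioi T := fun u hu => lt_of_le_of_lt hTt hu.1
    have hIoo_sub0 : Set.Ioo (t - δ) t ⊆ Set.Ioi (0 : ℝ) := fun u hu =>
      lt_of_le_of_lt (by linarith : (0 : ℝ) ≤ T) (hIoo_sub hu)
    have hIoi_sub : Set.Ioi T ⊆ Set.Ioi (0 : ℝ) := Set.Ioi_subset_Ioi (by linarith)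
    have hlow : c / 3 * (volume (Set.Ioo (t - δ) t)).toReal ≤ ∫ u in Set.Ioo (t - δ) t, y u :=
      by
        have := setIntegral_ge_of_const_le_real measurableSet_Ioo (by simp [Real.volume_Ioo])
          hall (hy_int'.mono_set hIoo_sub0)
        exact this
    have hvol : (volume (Set.Ioo (t - δ) t)).toReal = δ := by
      rw [Real.volume_Ioo]
      rw [ENNReal.toReal_ofReal (by linarith)]
      ring
    have hmono : ∫ u in Set.Ioo (t - δ) t, y u ≤ ∫ u in Set.Ioi T, y u := by
      refine setIntegral_mono_set (hy_int'.mono_set hIoi_sub) ?_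
        (HasSubset.Subset.eventuallyLE hIoo_sub)
      exact (ae_restrict_iff' measurableSet_Ioi).2
        (ae_of_all _ fun u hu => hy_nonneg u (le_of_lt (hIoi_sub hu)))
    rw [hvol] at hlow
    linarith
  push_neg at hnot
  obtain ⟨s, hsmem, hsy⟩ := hnot
  have hs0 : (0 : ℝ) < s := lt_of_le_of_lt (by linarith : (0 : ℝ) ≤ t - δ) hsmem.1
  have hsT : T < s := lt_of_le_of_lt hTt hsmem.1
  have hst : s < t := hsmem.2
  -- interval integral of h from s is small
  have hint_small : ∀ b, s ≤ b → (∫ v in s..b, h v) < c / 3 := by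
    intro b hb
    rw [intervalIntegral.integral_of_le hb]
    have hIoi_sub : Set.Ioi T ⊆ Set.Ioi (0 : ℝ) := Set.Ioi_subset_Ioi (by linarith)
    have hmono : ∫ v in Set.Ioc s b, h v ≤ ∫ v in Set.Ioi T, h v := by
      refine setIntegral_mono_set (hh_int'.mono_set hIoi_sub) ?_
        (HasSubset.Subset.eventuallyLE (fun v hv => lt_trans hsT hv.1))
      exact (ae_restrict_iff' measurableSet_Ioi).2
        (ae_of_all _ fun u hu => hh_nonneg u (le_of_lt (hIoi_sub hu)))
    linarith
  -- y stays below 1 on [s, t]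
  have hbelow : ∀ u ∈ Set.Icc s t, y u < 1 := by
    by_contra hcon
    push_neg at hcon
    obtain ⟨u₀, hu₀mem, hu₀⟩ := hcon
    set S : Set ℝ := Set.Icc s t ∩ y ⁻¹' Set.Ici 1 with hS_def
    have hSne : S.Nonempty := ⟨u₀, hu₀mem, hu₀⟩
    have hSclosed : IsClosed S := by
      refine ContinuousOn.preimage_isClosed_of_isClosed
        (hy_cont.mono fun x hx => le_trans hs0.le hx.1) isClosed_Icc isClosed_Ici
    have hSbdd : BddBelow S := ⟨s, fun x hx => hx.1.1⟩
    set τ : ℝ := sInf S with hτ_def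
    have hτmem : τ ∈ S := hSclosed.csInf_mem hSne hSbdd
    have hτs : s ≤ τ := hτmem.1.1
    have hτt : τ ≤ t := hτmem.1.2
    have hτy : 1 ≤ y τ := hτmem.2
    have hbound : ∀ v ∈ Set.Ioo s τ, y v ≤ 1 := by
      intro v hv
      by_contra hv1
      push_neg at hv1
      have : v ∈ S := ⟨⟨hv.1.le, le_trans hv.2.le hτt⟩, hv1.le⟩
      exact absurd (csInf_le hSbdd this) (not_le.2 hv.2)
    have hkey := zheng_key A₁ A₂ hA₁ y h y' hy_nonneg hy_cont hy_deriv hh_cont hineq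
      s τ hs0 hτs hbound
    have h1 : (A₁ + A₂) * (τ - s) ≤ c / 3 := by
      rw [← hδc]
      have : τ - s ≤ δ := by
        have : t - δ < s := hsmem.1
        linarith
      nlinarith
    have h2 := hint_small τ hτs
    have : y τ < c := by linarith
    linarith
  -- conclude with the key lemma on [s, t]
  have hkey := zheng_key A₁ A₂ hA₁ y h y' hy_nonneg hy_cont hy_deriv hh_cont hineq
    s t hs0 hst.le (fun v hv => (hbelow v ⟨hv.1.le, hv.2.le⟩).le)
  have h1 : (A₁ + A₂) * (t - s) ≤ c / 3 := by
    rw [← hδc]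
    have : t - s ≤ δ := by
      have : t - δ < s := hsmem.1
      linarith
    nlinarith
  have h2 := hint_small t hst.le
  have hyt : y t < c := by linarith
  rw [Real.dist_eq, sub_zero, abs_of_nonneg (hy_nonneg t ht0.le)]
  linarith
end

section
/- Let (X, 𝒜, μ) be a finite measure space, let L > 0 and m > 0, and let (fₙ)ₙ be a sequence of measurable functions on X with 0 ≤ fₙ ≤ L a.e. for every n. Suppose fₙ → f μ-almost everywhere, and that lim_{n→∞} ∫_{{fₙ > m}} fₙ dμ = 0. Then μ({x ∈ X : f(x) > m}) = 0. -/
open MeasureTheory Filter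

/-- Measure-theoretic core of Lemma 2.4: on a finite measure space, if `0 ≤ fₙ ≤ L` a.e.,
`fₙ → f` a.e., and `∫_{fₙ > m} fₙ dμ → 0`, then `μ {f > m} = 0`. -/
theorem limit_stays_below_obstacle
    {X : Type*} [MeasurableSpace X] (μ : Measure X) [IsFiniteMeasure μ]
    (L m : ℝ) (hL : 0 < L) (hm : 0 < m)
    (f : ℕ → X → ℝ) (g : X → ℝ)
    (hf_meas : ∀ n, Measurable (f n))
    (hf_bdd : ∀ n, ∀ᵐ x ∂μ, 0 ≤ f n x ∧ f n x ≤ L)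
    (hf_conv : ∀ᵐ x ∂μ, Tendsto (fun n => f n x) atTop (nhds (g x)))
    (hint : Tendsto (fun n => ∫ x in {x | m < f n x}, f n x ∂μ) atTop (nhds 0)) :
    μ {x | m < g x} = 0 := by
  set S : ℕ → Set X := fun n => {x | m < f n x} with hS
  have hmeasS : ∀ n, MeasurableSet (S n) := fun n =>
    measurableSet_lt measurable_const (hf_meas n)
  -- each f n is integrable
  have hInt : ∀ n, Integrable (f n) μ := by
    intro n
    refine (integrable_const L).mono' (hf_meas n).aestronglyMeasurable ?_
    filter_upwards [hf_bdd n] with x hx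
    rw [Real.norm_eq_abs, abs_le]
    exact ⟨le_trans (by linarith) hx.1, hx.2⟩
  -- m * (μ (S n)).toReal ≤ ∫ over S n
  have hle : ∀ n, m * (μ (S n)).toReal ≤ ∫ x in S n, f n x ∂μ := fun n =>
    setIntegral_ge_of_const_le_real (hmeasS n) (measure_ne_top μ _)
      (fun x hx => le_of_lt hx) ((hInt n).integrableOn)
  -- (μ (S n)).toReal → 0
  have htR : Tendsto (fun n => (μ (S n)).toReal) atTop (nhds 0) := by
    have h1 : Tendsto (fun n => m * (μ (S n)).toReal) atTop (nhds 0) := by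
      refine tendsto_of_tendsto_of_tendsto_of_le_of_le tendsto_const_nhds hint
        (fun n => mul_nonneg hm.le ENNReal.toReal_nonneg) hle
    have := h1.const_mul (m⁻¹)
    simpa [mul_comm, ← mul_assoc, mul_inv_cancel₀ hm.ne', inv_mul_cancel₀ hm.ne'] using this
  have hμS : Tendsto (fun n => μ (S n)) atTop (nhds 0) := by
    rw [← ENNReal.toReal_zero] at htR
    exact (ENNReal.tendsto_toReal_iff (fun n => measure_ne_top μ _)
      ENNReal.zero_ne_top).mp htR
  -- the tails ⋂_{k ≥ n} S k are null
  set I : ℕ → Set X := fun n => ⋂ k, ⋂ (_ : n ≤ k), S k with hI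
  have hInull : ∀ n, μ (I n) = 0 := by
    intro n
    have hle' : ∀ᶠ k in atTop, μ (I n) ≤ μ (S k) := by
      filter_upwards [eventually_ge_atTop n] with k hk
      exact measure_mono (Set.biInter_subset_of_mem hk)
    exact le_antisymm (ge_of_tendsto hμS hle') zero_le
  have hUnull : μ (⋃ n, I n) = 0 := measure_iUnion_null hInull
  refine measure_mono_null_ae ?_ hUnull
  filter_upwards [hf_conv] with x hx hgx
  have hev : ∀ᶠ n in atTop, m < f n x := hx.eventually_const_lt hgx
  obtain ⟨N, hN⟩ := hev.exists_forall_of_atTop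
  exact Set.mem_iUnion.2 ⟨N, Set.mem_iInter₂.2 fun k hk => hN k hk⟩
end

section
/- Let (X, 𝒜, μ) be a finite measure space, let B, L > 0, and let b : X → ℝ be measurable with 0 ≤ b ≤ B μ-a.e. Let u : X → ℝ be measurable with u ≥ 0 μ-a.e. and u ≤ 1 μ-a.e. on the set {b > 0}. Let (u_p)_{p∈ℕ} be a sequence of measurable functions with 0 ≤ u_p ≤ L μ-a.e. for every p, such that ∫_X |u_p − u| dμ → 0 as p → ∞. Then liminf_{p→∞} ∫_X b · u_p^p · (u_p − u) dμ ≥ 0. -/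
open MeasureTheory Filter

lemma pow_mul_one_sub_le (p : ℕ) {t : ℝ} (h0 : 0 ≤ t) (h1 : t ≤ 1) :
    t ^ p * (1 - t) ≤ 1 / (p + 1) := by
  have hpos : (0:ℝ) < (p:ℝ) + 1 := by positivity
  have hsum : ((p:ℝ)+1) * t^p ≤ ∑ k ∈ Finset.range (p+1), t^k := by
    have h1' : ∀ k ∈ Finset.range (p+1), t^p ≤ t^k := fun k hk =>
      pow_le_pow_of_le_one h0 h1 (Nat.lt_succ_iff.mp (Finset.mem_range.mp hk))
    calc ((p:ℝ)+1) * t^p = ∑ _k ∈ Finset.range (p+1), t^p := by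
          simp [Finset.sum_const, nsmul_eq_mul]
      _ ≤ _ := Finset.sum_le_sum h1'
  have hgeom : (∑ k ∈ Finset.range (p+1), t^k) * (1 - t) = 1 - t^(p+1) := by
    have := geom_sum_mul t (p+1)
    nlinarith [this]
  have hfin : ((p:ℝ)+1) * t^p * (1 - t) ≤ 1 - t^(p+1) := by
    rw [← hgeom]
    exact mul_le_mul_of_nonneg_right hsum (by linarith)
  have hp2 : 0 ≤ t^(p+1) := pow_nonneg h0 _
  rw [le_div_iff₀ hpos]
  nlinarith [hfin]

/-- Key lower-semicontinuity estimate from Lemma 2.5: if `0 ≤ b ≤ B` a.e., `u ≥ 0` a.e. with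
`u ≤ 1` a.e. on `{b > 0}`, `0 ≤ u_p ≤ L` a.e., and `∫ |u_p − u| dμ → 0`, then
`liminf_p ∫ b · u_p^p · (u_p − u) dμ ≥ 0`. -/
theorem liminf_penalization_nonneg
    {X : Type*} [MeasurableSpace X] (μ : Measure X) [IsFiniteMeasure μ]
    (B L : ℝ) (hB : 0 < B) (hL : 0 < L)
    (b : X → ℝ) (hb_meas : Measurable b) (hb_bdd : ∀ᵐ x ∂μ, 0 ≤ b x ∧ b x ≤ B)
    (u : X → ℝ) (hu_meas : Measurable u) (hu0 : ∀ᵐ x ∂μ, 0 ≤ u x)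
    (hu1 : ∀ᵐ x ∂μ, 0 < b x → u x ≤ 1)
    (up : ℕ → X → ℝ) (hup_meas : ∀ p, Measurable (up p))
    (hup_bdd : ∀ p, ∀ᵐ x ∂μ, 0 ≤ up p x ∧ up p x ≤ L)
    (hconv : Tendsto (fun p => ∫ x, |up p x - u x| ∂μ) atTop (nhds 0)) :
    0 ≤ Filter.atTop.liminf (fun p => ∫ x, b x * (up p x) ^ p * (up p x - u x) ∂μ) := by
  set v : ℕ → ℝ := fun p => ∫ x, b x * (up p x) ^ p * (up p x - u x) ∂μ with hv
  set c : ℕ → ℝ := fun p => (μ Set.univ).toReal * (-(B / (p + 1))) with hc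
  -- pointwise a.e. lower bound
  have hpt : ∀ p, ∀ᵐ x ∂μ, -(B / (p + 1)) ≤ b x * (up p x) ^ p * (up p x - u x) := by
    intro p
    filter_upwards [hb_bdd, hu0, hu1, hup_bdd p] with x ⟨hb0, hbB⟩ hu0x hu1x ⟨ht0, htL⟩
    have hpos : (0:ℝ) < (p:ℝ) + 1 := by positivity
    have hBdiv : 0 < B / ((p:ℝ) + 1) := by positivity
    rcases le_or_gt (u x) (up p x) with h | h
    · have : 0 ≤ b x * (up p x) ^ p * (up p x - u x) :=
        mul_nonneg (mul_nonneg hb0 (pow_nonneg ht0 p)) (by linarith)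
      linarith
    · rcases eq_or_lt_of_le hb0 with hb | hb
      · simp [← hb]; linarith
      · have hu1' : u x ≤ 1 := hu1x hb
        have ht1 : up p x ≤ 1 := by linarith
        have key := pow_mul_one_sub_le p ht0 ht1
        have hp0 : 0 ≤ (up p x) ^ p := pow_nonneg ht0 p
        have h1 : (up p x) ^ p * (u x - up p x) ≤ 1 / (p + 1) := by
          nlinarith
        have h2 : b x * ((up p x) ^ p * (u x - up p x)) ≤ B * (1 / (p + 1)) :=
          mul_le_mul hbB h1 (mul_nonneg hp0 (by linarith)) (le_of_lt hB)
        have h3 : -(B * (1 / ((p:ℝ)+1))) ≤ b x * (up p x) ^ p * (up p x - u x) := by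
          nlinarith
        calc -(B / ((p:ℝ)+1)) = -(B * (1/((p:ℝ)+1))) := by ring
          _ ≤ _ := h3
  -- integrability
  have hint : ∀ p, Integrable (fun x => b x * (up p x) ^ p * (up p x - u x)) μ := by
    intro p
    apply Integrable.mono' (integrable_const (B * L ^ p * (L + 1)))
    · exact ((hb_meas.mul ((hup_meas p).pow_const p)).mul
        ((hup_meas p).sub hu_meas)).aestronglyMeasurable
    · filter_upwards [hb_bdd, hu0, hu1, hup_bdd p] with x ⟨hb0, hbB⟩ hu0x hu1x ⟨ht0, htL⟩
      have hp0 : 0 ≤ (up p x) ^ p := pow_nonneg ht0 p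
      have hpL : (up p x) ^ p ≤ L ^ p := pow_le_pow_left₀ ht0 htL p
      rcases eq_or_lt_of_le hb0 with hb | hb
      · simp [← hb]; positivity
      · have hu1' : u x ≤ 1 := hu1x hb
        have habs : |up p x - u x| ≤ L + 1 := by
          rw [abs_le]; constructor <;> nlinarith
        rw [Real.norm_eq_abs, abs_mul, abs_mul, abs_of_nonneg hb0, abs_of_nonneg hp0]
        exact mul_le_mul (mul_le_mul hbB hpL hp0 hB.le) habs (abs_nonneg _) (by positivity)
  -- integral lower bound
  have hle : ∀ p, c p ≤ v p := by
    intro p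
    have := integral_mono_ae (integrable_const (-(B / ((p:ℕ) + 1)))) (hint p) (hpt p)
    simpa [hc, hv, smul_eq_mul, Measure.real] using this
  -- c tends to 0
  have hclim : Tendsto c atTop (nhds 0) := by
    have h1 : Tendsto (fun p : ℕ => B / ((p:ℝ) + 1)) atTop (nhds 0) := by
      apply Tendsto.div_atTop tendsto_const_nhds
      exact tendsto_atTop_add_const_right _ 1 tendsto_natCast_atTop_atTop
    have := (h1.neg).const_mul ((μ Set.univ).toReal)
    simpa [hc] using this
  have h0 : Filter.atTop.liminf c = 0 := hclim.liminf_eq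
  have hcbd : IsBoundedUnder (· ≥ ·) atTop c := hclim.isBoundedUnder_ge
  by_cases hvcb : IsCoboundedUnder (· ≥ ·) atTop v
  · calc (0:ℝ) = Filter.atTop.liminf c := h0.symm
      _ ≤ Filter.atTop.liminf v := liminf_le_liminf (Eventually.of_forall hle) hcbd hvcb
  · -- liminf is junk sSup of a non-bddAbove set, which is 0
    have hnb : ¬ BddAbove {a : ℝ | ∀ᶠ n in Filter.map v atTop, a ≤ n} := by
      intro ⟨w, hw⟩
      exact hvcb ⟨w, fun a ha => hw ha⟩
    have : Filter.atTop.liminf v = 0 := by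
      rw [liminf, limsInf, Real.sSup_of_not_bddAbove hnb]
    rw [this]
end
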